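/- The bound k ≥ 4 in the statement 'a full circulant polygon P_k^{k−1} with k ≥ 4 has no holes' is tight: there exists a full circulant polygon P_3^2, i.e., a polygonal region P ⊆ ℝ² together with pairwise distinct points g_1, g_2, g_3 ∈ P and w_1, w_2, w_3 ∈ P satisfying V(g_i) ∩ {w_1,w_2,w_3} = {w_1,w_2,w_3} \ {w_i} for each i and |V(w) ∩ {g_1,g_2,g_3}| ≥ 2 for every w ∈ P, such that the complement ℝ² \ P has a bounded connected component (P has a hole). -/

import Mathlib

/-- Points of the Euclidean plane. -/
abbrev Pt := EuclideanSpace ℝ (Fin 2)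

/-- Visibility region of `p` in `P`. -/
def Vis (P : Set Pt) (p : Pt) : Set Pt := {q ∈ P | segment ℝ p q ⊆ P}

/-- A polygonal region: a compact connected subset of the plane equal to the closure of
its interior, whose frontier is contained in finitely many closed segments. -/
def IsPolygonalRegion (P : Set Pt) : Prop :=
  IsCompact P ∧ IsConnected P ∧ P = closure (interior P) ∧
  ∃ E : Finset (Pt × Pt), frontier P ⊆ ⋃ e ∈ E, segment ℝ e.1 e.2

/-- A full circulant polygon `P_k^{k-1}`: a polygonal region `P` with pairwise distinct
guards `g 0, …, g (k-1) ∈ P` and witnesses `w 0, …, w (k-1) ∈ P` such that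
`V(g i) ∩ W = W \ {w i}` for all `i`, and every point of `P` sees at least `k - 1`
of the guards. -/
def IsFullCirculant (P : Set Pt) (k : ℕ) (g w : Fin k → Pt) : Prop :=
  IsPolygonalRegion P ∧
  Function.Injective g ∧ Function.Injective w ∧
  (∀ i, g i ∈ P) ∧ (∀ i, w i ∈ P) ∧
  (∀ i, Vis P (g i) ∩ Set.range w = Set.range w \ {w i}) ∧
  (∀ p ∈ P, k - 1 ≤ (Vis P p ∩ Set.range g).ncard)


open Set

section FullCirculantAux


noncomputable def pt (a b : ℝ) : Pt := WithLp.toLp 2 ![a, b]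
@[simp] lemma pt_zero (a b : ℝ) : pt a b 0 = a := rfl
@[simp] lemma pt_one (a b : ℝ) : pt a b 1 = b := rfl

lemma combo_apply (a b : ℝ) (x y : Pt) (i : Fin 2) : (a • x + b • y) i = a * x i + b * y i := rfl

lemma seg_mem {u v p : Pt} {t : ℝ} (h0 : 0 ≤ t) (h1 : t ≤ 1)
    (hx : p 0 = (1-t)*u 0 + t*v 0) (hy : p 1 = (1-t)*u 1 + t*v 1) : p ∈ segment ℝ u v := by
  refine ⟨1-t, t, by linarith, h0, by ring, ?_⟩
  ext i; fin_cases i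
  · rw [combo_apply]; exact hx.symm
  · rw [combo_apply]; exact hy.symm

def Q1 : Set Pt := {p | 0 ≤ p 0 ∧ 0 ≤ p 1 ∧ p 1 ≤ 1 ∧ p 0 + p 1 ≤ 6}
def Q2 : Set Pt := {p | 0 ≤ p 0 ∧ p 0 ≤ 1 ∧ 0 ≤ p 1 ∧ p 0 + p 1 ≤ 6}
def Q3 : Set Pt := {p | 0 ≤ p 0 ∧ 0 ≤ p 1 ∧ 4 ≤ p 0 + p 1 ∧ p 0 + p 1 ≤ 6}
def Pan : Set Pt := Q1 ∪ Q2 ∪ Q3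

lemma convex_Q1 : Convex ℝ Q1 := by
  intro x hx y hy a b ha hb hab
  simp only [Q1, mem_setOf_eq, combo_apply] at *
  refine ⟨by nlinarith [hx.1, hy.1], by nlinarith [hx.2.1, hy.2.1], ?_, ?_⟩ <;> nlinarith [hx.2.2, hy.2.2]
lemma convex_Q2 : Convex ℝ Q2 := by
  intro x hx y hy a b ha hb hab
  simp only [Q2, mem_setOf_eq, combo_apply] at *
  refine ⟨by nlinarith [hx.1, hy.1], by nlinarith [hx.2.1, hy.2.1], ?_, ?_⟩ <;> nlinarith [hx.2.2, hy.2.2]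
lemma convex_Q3 : Convex ℝ Q3 := by
  intro x hx y hy a b ha hb hab
  simp only [Q3, mem_setOf_eq, combo_apply] at *
  refine ⟨by nlinarith [hx.1, hy.1], by nlinarith [hx.2.1, hy.2.1], ?_, ?_⟩ <;> nlinarith [hx.2.2, hy.2.2]

lemma cont0 : Continuous fun p : Pt => p 0 := PiLp.continuous_apply _ _ _
lemma cont1 : Continuous fun p : Pt => p 1 := PiLp.continuous_apply _ _ _

lemma closed_Q1 : IsClosed Q1 := by
  have : Q1 = {p : Pt | 0 ≤ p 0} ∩ ({p | 0 ≤ p 1} ∩ ({p | p 1 ≤ 1} ∩ {p | p 0 + p 1 ≤ 6})) := by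
    ext p; simp [Q1, and_assoc]
  rw [this]
  exact (isClosed_le continuous_const cont0).inter ((isClosed_le continuous_const cont1).inter
    ((isClosed_le cont1 continuous_const).inter (isClosed_le (cont0.add cont1) continuous_const)))
lemma closed_Q2 : IsClosed Q2 := by
  have : Q2 = {p : Pt | 0 ≤ p 0} ∩ ({p | p 0 ≤ 1} ∩ ({p | 0 ≤ p 1} ∩ {p | p 0 + p 1 ≤ 6})) := by
    ext p; simp [Q2, and_assoc]
  rw [this]
  exact (isClosed_le continuous_const cont0).inter ((isClosed_le cont0 continuous_const).inter
    ((isClosed_le continuous_const cont1).inter (isClosed_le (cont0.add cont1) continuous_const)))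
lemma closed_Q3 : IsClosed Q3 := by
  have : Q3 = {p : Pt | 0 ≤ p 0} ∩ ({p | 0 ≤ p 1} ∩ ({p | 4 ≤ p 0 + p 1} ∩ {p | p 0 + p 1 ≤ 6})) := by
    ext p; simp [Q3, and_assoc]
  rw [this]
  exact (isClosed_le continuous_const cont0).inter ((isClosed_le continuous_const cont1).inter
    ((isClosed_le continuous_const (cont0.add cont1)).inter (isClosed_le (cont0.add cont1) continuous_const)))

lemma P_coords {p : Pt} (hp : p ∈ Pan) : 0 ≤ p 0 ∧ p 0 ≤ 6 ∧ 0 ≤ p 1 ∧ p 1 ≤ 6 := by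
  rcases hp with (h | h) | h <;>
    · obtain ⟨h1, h2, h3, h4⟩ := h
      refine ⟨by linarith, by linarith, by linarith, by linarith⟩

lemma bounded_of_coords {S : Set Pt} (r : ℝ) (hr : 0 ≤ r)
    (h : ∀ p ∈ S, |p 0| ≤ r ∧ |p 1| ≤ r) : Bornology.IsBounded S := by
  rw [isBounded_iff_forall_norm_le]
  refine ⟨2 * r, fun p hp => ?_⟩
  obtain ⟨h0, h1⟩ := h p hp
  rw [EuclideanSpace.norm_eq]
  have : ∑ i, ‖p i‖ ^ 2 = ‖p 0‖^2 + ‖p 1‖^2 := by rw [Fin.sum_univ_two]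
  rw [this]
  have h2 : ‖p 0‖^2 + ‖p 1‖^2 ≤ (2*r)^2 := by
    rw [Real.norm_eq_abs, Real.norm_eq_abs]
    nlinarith [abs_nonneg (p 0), abs_nonneg (p 1)]
  calc Real.sqrt (‖p 0‖^2 + ‖p 1‖^2) ≤ Real.sqrt ((2*r)^2) := Real.sqrt_le_sqrt h2
    _ = 2*r := Real.sqrt_sq (by linarith)

lemma compact_P : IsCompact Pan := by
  apply Metric.isCompact_of_isClosed_isBounded
  · exact (closed_Q1.union closed_Q2).union closed_Q3
  · refine bounded_of_coords 6 (by norm_num) fun p hp => ?_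
    obtain ⟨a, b, c, d⟩ := P_coords hp
    constructor <;> rw [abs_le] <;> constructor <;> linarith

lemma A_mem1 : pt 0 0 ∈ Q1 := by simp [Q1]
lemma A_mem2 : pt 0 0 ∈ Q2 := by simp [Q2]
lemma B_mem1 : pt 6 0 ∈ Q1 := by norm_num [Q1]
lemma B_mem3 : pt 6 0 ∈ Q3 := by norm_num [Q3]
lemma C_mem2 : pt 0 6 ∈ Q2 := by norm_num [Q2]
lemma C_mem3 : pt 0 6 ∈ Q3 := by norm_num [Q3]

lemma connected_P : IsConnected Pan := by
  refine ⟨⟨pt 0 0, Or.inl (Or.inl A_mem1)⟩, ?_⟩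
  have h12 : IsPreconnected (Q1 ∪ Q2) :=
    IsPreconnected.union (pt 0 0) A_mem1 A_mem2 convex_Q1.isPreconnected convex_Q2.isPreconnected
  exact IsPreconnected.union (pt 6 0) (Or.inl B_mem1) B_mem3 h12 convex_Q3.isPreconnected

def U1 : Set Pt := {p | 0 < p 0 ∧ 0 < p 1 ∧ p 1 < 1 ∧ p 0 + p 1 < 6}
def U2 : Set Pt := {p | 0 < p 0 ∧ p 0 < 1 ∧ 0 < p 1 ∧ p 0 + p 1 < 6}
def U3 : Set Pt := {p | 0 < p 0 ∧ 0 < p 1 ∧ 4 < p 0 + p 1 ∧ p 0 + p 1 < 6}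

lemma open_U1 : IsOpen U1 := by
  have : U1 = {p : Pt | 0 < p 0} ∩ ({p | 0 < p 1} ∩ ({p | p 1 < 1} ∩ {p | p 0 + p 1 < 6})) := by
    ext p; simp [U1, and_assoc]
  rw [this]
  exact (isOpen_lt continuous_const cont0).inter ((isOpen_lt continuous_const cont1).inter
    ((isOpen_lt cont1 continuous_const).inter (isOpen_lt (cont0.add cont1) continuous_const)))
lemma open_U2 : IsOpen U2 := by
  have : U2 = {p : Pt | 0 < p 0} ∩ ({p | p 0 < 1} ∩ ({p | 0 < p 1} ∩ {p | p 0 + p 1 < 6})) := by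
    ext p; simp [U2, and_assoc]
  rw [this]
  exact (isOpen_lt continuous_const cont0).inter ((isOpen_lt cont0 continuous_const).inter
    ((isOpen_lt continuous_const cont1).inter (isOpen_lt (cont0.add cont1) continuous_const)))
lemma open_U3 : IsOpen U3 := by
  have : U3 = {p : Pt | 0 < p 0} ∩ ({p | 0 < p 1} ∩ ({p | 4 < p 0 + p 1} ∩ {p | p 0 + p 1 < 6})) := by
    ext p; simp [U3, and_assoc]
  rw [this]
  exact (isOpen_lt continuous_const cont0).inter ((isOpen_lt continuous_const cont1).inter
    ((isOpen_lt continuous_const (cont0.add cont1)).inter (isOpen_lt (cont0.add cont1) continuous_const)))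

lemma U1_sub : U1 ⊆ Q1 := fun p ⟨a,b,c,d⟩ => ⟨a.le, b.le, c.le, d.le⟩
lemma U2_sub : U2 ⊆ Q2 := fun p ⟨a,b,c,d⟩ => ⟨a.le, b.le, c.le, d.le⟩
lemma U3_sub : U3 ⊆ Q3 := fun p ⟨a,b,c,d⟩ => ⟨a.le, b.le, c.le, d.le⟩

lemma int_Q1 : pt 3 (1/2) ∈ interior Q1 :=
  interior_maximal U1_sub open_U1 (by norm_num [U1])
lemma int_Q2 : pt (1/2) 3 ∈ interior Q2 :=
  interior_maximal U2_sub open_U2 (by norm_num [U2])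
lemma int_Q3 : pt (1/2) (9/2) ∈ interior Q3 :=
  interior_maximal U3_sub open_U3 (by norm_num [U3])

lemma mem_closure_interior {Q : Set Pt} (hQ : Convex ℝ Q) {x y : Pt}
    (hx : x ∈ Q) (hy : y ∈ interior Q) (hsub : interior Q ⊆ interior Pan) :
    x ∈ closure (interior Pan) := by
  have key : ∀ t : ℝ, t ∈ Set.Ioc (0:ℝ) 1 → x + t • (y - x) ∈ interior Q :=
    fun t ht => hQ.add_smul_sub_mem_interior hx hy ht
  have hc : Filter.Tendsto (fun t : ℝ => x + t • (y - x)) (nhdsWithin 0 (Set.Ioi 0)) (nhds x) := by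
    have : Continuous (fun t : ℝ => x + t • (y - x)) := by continuity
    have h0 : Filter.Tendsto (fun t : ℝ => x + t • (y - x)) (nhds 0) (nhds x) := by
      have := this.tendsto 0
      simpa using this
    exact h0.mono_left nhdsWithin_le_nhds
  refine mem_closure_of_tendsto hc ?_
  filter_upwards [Ioc_mem_nhdsGT_of_mem (by norm_num : (0:ℝ) ∈ Set.Ico (0:ℝ) 1)] with t ht
  exact hsub (key t ht)

lemma closure_int_P : Pan = closure (interior Pan) := by
  apply Subset.antisymm
  · rintro p ((hp | hp) | hp)
    · exact mem_closure_interior convex_Q1 hp int_Q1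
        (interior_mono (fun q hq => Or.inl (Or.inl hq)))
    · exact mem_closure_interior convex_Q2 hp int_Q2
        (interior_mono (fun q hq => Or.inl (Or.inr hq)))
    · exact mem_closure_interior convex_Q3 hp int_Q3
        (interior_mono (fun q hq => Or.inr hq))
  · have : IsClosed Pan := (closed_Q1.union closed_Q2).union closed_Q3
    exact closure_minimal interior_subset this

lemma Q1_faces : Q1 \ U1 ⊆ segment ℝ (pt 0 0) (pt 0 1) ∪ segment ℝ (pt 0 0) (pt 6 0) ∪
    segment ℝ (pt 0 1) (pt 5 1) ∪ segment ℝ (pt 5 1) (pt 6 0) := by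
  rintro p ⟨⟨h1, h2, h3, h4⟩, hn⟩
  simp only [U1, mem_setOf_eq, not_and_or, not_lt] at hn
  rcases hn with h | h | h | h
  · left; left; left
    exact seg_mem (t := p 1) h2 h3 (by simp only [pt_zero]; linarith) (by simp only [pt_one]; ring)
  · left; left; right
    exact seg_mem (t := p 0 / 6) (by linarith) (by linarith) (by simp only [pt_zero]; ring)
      (by simp only [pt_one]; linarith)
  · left; right
    exact seg_mem (t := p 0 / 5) (by linarith) (by linarith) (by simp only [pt_zero]; ring)
      (by simp only [pt_one]; linarith)
  · right
    exact seg_mem (t := 1 - p 1) (by linarith) (by linarith) (by simp only [pt_zero]; linarith)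
      (by simp only [pt_one]; linarith)

lemma Q2_faces : Q2 \ U2 ⊆ segment ℝ (pt 0 0) (pt 1 0) ∪ segment ℝ (pt 0 0) (pt 0 6) ∪
    segment ℝ (pt 1 0) (pt 1 5) ∪ segment ℝ (pt 1 5) (pt 0 6) := by
  rintro p ⟨⟨h1, h2, h3, h4⟩, hn⟩
  simp only [U2, mem_setOf_eq, not_and_or, not_lt] at hn
  rcases hn with h | h | h | h
  · left; left; right
    exact seg_mem (t := p 1 / 6) (by linarith) (by linarith) (by simp only [pt_zero]; linarith)
      (by simp only [pt_one]; ring)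
  · left; right
    exact seg_mem (t := p 1 / 5) (by linarith) (by linarith) (by simp only [pt_zero]; linarith)
      (by simp only [pt_one]; ring)
  · left; left; left
    exact seg_mem (t := p 0) h1 h2 (by simp only [pt_zero]; ring) (by simp only [pt_one]; linarith)
  · right
    exact seg_mem (t := 1 - p 0) (by linarith) (by linarith) (by simp only [pt_zero]; linarith)
      (by simp only [pt_one]; linarith)

lemma Q3_faces : Q3 \ U3 ⊆ segment ℝ (pt 0 4) (pt 4 0) ∪ segment ℝ (pt 0 6) (pt 6 0) ∪
    segment ℝ (pt 0 4) (pt 0 6) ∪ segment ℝ (pt 4 0) (pt 6 0) := by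
  rintro p ⟨⟨h1, h2, h3, h4⟩, hn⟩
  simp only [U3, mem_setOf_eq, not_and_or, not_lt] at hn
  rcases hn with h | h | h | h
  · left; right
    exact seg_mem (t := (p 1 - 4) / 2) (by linarith) (by linarith)
      (by simp only [pt_zero]; linarith) (by simp only [pt_one]; ring)
  · right
    exact seg_mem (t := (p 0 - 4) / 2) (by linarith) (by linarith)
      (by simp only [pt_zero]; ring) (by simp only [pt_one]; linarith)
  · left; left; left
    exact seg_mem (t := p 0 / 4) (by linarith) (by linarith)
      (by simp only [pt_zero]; ring) (by simp only [pt_one]; linarith)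
  · left; left; right
    exact seg_mem (t := p 0 / 6) (by linarith) (by linarith)
      (by simp only [pt_zero]; ring) (by simp only [pt_one]; linarith)

open scoped Classical in
noncomputable def E12 : Finset (Pt × Pt) :=
  {(pt 0 0, pt 0 1), (pt 0 0, pt 6 0), (pt 0 1, pt 5 1), (pt 5 1, pt 6 0),
   (pt 0 0, pt 1 0), (pt 0 0, pt 0 6), (pt 1 0, pt 1 5), (pt 1 5, pt 0 6),
   (pt 0 4, pt 4 0), (pt 0 6, pt 6 0), (pt 0 4, pt 0 6), (pt 4 0, pt 6 0)}

lemma seg_in_union {u v : Pt} (h : (u, v) ∈ E12) :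
    segment ℝ u v ⊆ ⋃ e ∈ E12, segment ℝ e.1 e.2 :=
  fun x hx => mem_iUnion₂.2 ⟨(u, v), h, hx⟩

lemma frontier_P_sub : frontier Pan ⊆ ⋃ e ∈ E12, segment ℝ e.1 e.2 := by
  have hf1 : frontier Q1 ⊆ Q1 \ U1 := by
    rw [frontier, closed_Q1.closure_eq]
    exact diff_subset_diff_right (interior_maximal U1_sub open_U1)
  have hf2 : frontier Q2 ⊆ Q2 \ U2 := by
    rw [frontier, closed_Q2.closure_eq]
    exact diff_subset_diff_right (interior_maximal U2_sub open_U2)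
  have hf3 : frontier Q3 ⊆ Q3 \ U3 := by
    rw [frontier, closed_Q3.closure_eq]
    exact diff_subset_diff_right (interior_maximal U3_sub open_U3)
  intro x hx
  have step : ∀ s t : Set Pt, frontier (s ∪ t) ⊆ frontier s ∪ frontier t := by
    intro s t y hy
    rcases frontier_union_subset s t hy with h | h
    · exact Or.inl h.1
    · exact Or.inr h.2
  have : x ∈ frontier Q1 ∪ frontier Q2 ∪ frontier Q3 := by
    rcases step _ _ hx with h | h
    · exact step _ _ h |>.imp id id |>.elim (fun h' => Or.inl (Or.inl h')) (fun h' => Or.inl (Or.inr h'))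
    · exact Or.inr h
  rcases this with (h | h) | h
  · rcases Q1_faces (hf1 h) with ((h' | h') | h') | h'
    · exact seg_in_union (by simp [E12]) h'
    · exact seg_in_union (by simp [E12]) h'
    · exact seg_in_union (by simp [E12]) h'
    · exact seg_in_union (by simp [E12]) h'
  · rcases Q2_faces (hf2 h) with ((h' | h') | h') | h'
    · exact seg_in_union (by simp [E12]) h'
    · exact seg_in_union (by simp [E12]) h'
    · exact seg_in_union (by simp [E12]) h'
    · exact seg_in_union (by simp [E12]) h'
  · rcases Q3_faces (hf3 h) with ((h' | h') | h') | h'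
    · exact seg_in_union (by simp [E12]) h'
    · exact seg_in_union (by simp [E12]) h'
    · exact seg_in_union (by simp [E12]) h'
    · exact seg_in_union (by simp [E12]) h'

noncomputable def gpt : Fin 3 → Pt := ![pt 0 0, pt 6 0, pt 0 6]
noncomputable def wpt : Fin 3 → Pt := ![pt (5/2) (5/2), pt (1/2) 2, pt 2 (1/2)]

@[simp] lemma gpt0 : gpt 0 = pt 0 0 := rfl
@[simp] lemma gpt1 : gpt 1 = pt 6 0 := rfl
@[simp] lemma gpt2 : gpt 2 = pt 0 6 := rfl
@[simp] lemma wpt0 : wpt 0 = pt (5/2) (5/2) := rfl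
@[simp] lemma wpt1 : wpt 1 = pt (1/2) 2 := rfl
@[simp] lemma wpt2 : wpt 2 = pt 2 (1/2) := rfl

lemma pt_ne_fst {a b c d : ℝ} (h : a ≠ c) : pt a b ≠ pt c d :=
  fun he => h (by rw [← pt_zero a b, he, pt_zero])
lemma pt_ne_snd {a b c d : ℝ} (h : b ≠ d) : pt a b ≠ pt c d :=
  fun he => h (by rw [← pt_one a b, he, pt_one])

lemma inj3 {f : Fin 3 → Pt} (h01 : f 0 ≠ f 1) (h02 : f 0 ≠ f 2) (h12 : f 1 ≠ f 2) :
    Function.Injective f := by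
  intro i j h
  fin_cases i <;> fin_cases j <;>
    first
      | rfl
      | exact absurd h h01 | exact absurd h h02 | exact absurd h h12
      | exact absurd h.symm h01 | exact absurd h.symm h02 | exact absurd h.symm h12

lemma g_inj : Function.Injective gpt :=
  inj3 (pt_ne_fst (by norm_num)) (pt_ne_snd (by norm_num)) (pt_ne_fst (by norm_num))
lemma w_inj : Function.Injective wpt :=
  inj3 (pt_ne_fst (by norm_num)) (pt_ne_snd (by norm_num)) (pt_ne_fst (by norm_num))

lemma w0_mem3 : wpt 0 ∈ Q3 := by norm_num [Q3]
lemma w1_mem2 : wpt 1 ∈ Q2 := by norm_num [Q2]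
lemma w2_mem1 : wpt 2 ∈ Q1 := by norm_num [Q1]

lemma Q1_subP : Q1 ⊆ Pan := fun _ h => Or.inl (Or.inl h)
lemma Q2_subP : Q2 ⊆ Pan := fun _ h => Or.inl (Or.inr h)
lemma Q3_subP : Q3 ⊆ Pan := fun _ h => Or.inr h

lemma vis_of_convex {Q : Set Pt} (hQ : Convex ℝ Q) (hsub : Q ⊆ Pan) {a q : Pt}
    (ha : a ∈ Q) (hq : q ∈ Q) : q ∈ Vis Pan a :=
  ⟨hsub hq, fun x hx => hsub (hQ.segment_subset ha hq hx)⟩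

lemma hole_not_mem {p : Pt} (h1 : 1 < p 0) (h2 : 1 < p 1) (h3 : p 0 + p 1 < 4) : p ∉ Pan := by
  rintro ((⟨a, b, c, d⟩ | ⟨a, b, c, d⟩) | ⟨a, b, c, d⟩) <;> linarith

lemma not_vis (i : Fin 3) : wpt i ∉ Vis Pan (gpt i) := by
  fin_cases i
  · rintro ⟨-, hseg⟩
    have hb : pt (3/2) (3/2) ∈ segment ℝ (gpt 0) (wpt 0) := by
      refine seg_mem (t := 3/5) (by norm_num) (by norm_num) ?_ ?_ <;> norm_num
    exact hole_not_mem (p := pt (3/2) (3/2)) (by norm_num) (by norm_num) (by norm_num) (hseg hb)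
  · rintro ⟨-, hseg⟩
    have hb : pt (15/8) (3/2) ∈ segment ℝ (gpt 1) (wpt 1) := by
      refine seg_mem (t := 3/4) (by norm_num) (by norm_num) ?_ ?_ <;> norm_num
    exact hole_not_mem (p := pt (15/8) (3/2)) (by norm_num) (by norm_num) (by norm_num) (hseg hb)
  · rintro ⟨-, hseg⟩
    have hb : pt (3/2) (15/8) ∈ segment ℝ (gpt 2) (wpt 2) := by
      refine seg_mem (t := 3/4) (by norm_num) (by norm_num) ?_ ?_ <;> norm_num
    exact hole_not_mem (p := pt (3/2) (15/8)) (by norm_num) (by norm_num) (by norm_num) (hseg hb)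

lemma sees (i j : Fin 3) (hne : j ≠ i) : wpt j ∈ Vis Pan (gpt i) := by
  fin_cases i <;> fin_cases j <;>
    first
      | exact absurd rfl hne
      | exact vis_of_convex convex_Q2 Q2_subP A_mem2 w1_mem2
      | exact vis_of_convex convex_Q1 Q1_subP A_mem1 w2_mem1
      | exact vis_of_convex convex_Q3 Q3_subP B_mem3 w0_mem3
      | exact vis_of_convex convex_Q1 Q1_subP B_mem1 w2_mem1
      | exact vis_of_convex convex_Q3 Q3_subP C_mem3 w0_mem3
      | exact vis_of_convex convex_Q2 Q2_subP C_mem2 w1_mem2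

lemma vis_eq (i : Fin 3) : Vis Pan (gpt i) ∩ Set.range wpt = Set.range wpt \ {wpt i} := by
  ext q
  constructor
  · rintro ⟨hv, j, rfl⟩
    refine ⟨⟨j, rfl⟩, fun hq => ?_⟩
    rw [mem_singleton_iff] at hq
    exact not_vis i (hq ▸ hv)
  · rintro ⟨⟨j, rfl⟩, hne⟩
    rw [mem_singleton_iff] at hne
    exact ⟨sees i j (fun h => hne (by rw [h])), ⟨j, rfl⟩⟩

lemma two_le_vis {p : Pt} {Q : Set Pt} (hQ : Convex ℝ Q) (hsub : Q ⊆ Pan) (hp : p ∈ Q)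
    {i j : Fin 3} (hij : gpt i ≠ gpt j) (hi : gpt i ∈ Q) (hj : gpt j ∈ Q) :
    2 ≤ (Vis Pan p ∩ Set.range gpt).ncard := by
  have hfin : (Vis Pan p ∩ Set.range gpt).Finite :=
    (Set.finite_range gpt).subset inter_subset_right
  have hsubset : ({gpt i, gpt j} : Set Pt) ⊆ Vis Pan p ∩ Set.range gpt := by
    rintro x (rfl | rfl)
    · exact ⟨vis_of_convex hQ hsub hp hi, ⟨i, rfl⟩⟩
    · exact ⟨vis_of_convex hQ hsub hp hj, ⟨j, rfl⟩⟩
  calc 2 = ({gpt i, gpt j} : Set Pt).ncard := (Set.ncard_pair hij).symm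
    _ ≤ _ := Set.ncard_le_ncard hsubset hfin

lemma guard_count {p : Pt} (hp : p ∈ Pan) : 2 ≤ (Vis Pan p ∩ Set.range gpt).ncard := by
  rcases hp with (h | h) | h
  · exact two_le_vis convex_Q1 Q1_subP h (i := 0) (j := 1)
      (pt_ne_fst (by norm_num)) A_mem1 B_mem1
  · exact two_le_vis convex_Q2 Q2_subP h (i := 0) (j := 2)
      (pt_ne_snd (by norm_num)) A_mem2 C_mem2
  · exact two_le_vis convex_Q3 Q3_subP h (i := 1) (j := 2)
      (pt_ne_fst (by norm_num)) B_mem3 C_mem3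

def Hole : Set Pt := {p | 1 < p 0 ∧ 1 < p 1 ∧ p 0 + p 1 < 4}
def ExtSet : Set Pt := {p | p 0 < 0} ∪ {p | p 1 < 0} ∪ {p | 6 < p 0 + p 1}

lemma open_Hole : IsOpen Hole := by
  have : Hole = {p : Pt | 1 < p 0} ∩ ({p | 1 < p 1} ∩ {p | p 0 + p 1 < 4}) := by
    ext p; simp [Hole, and_assoc]
  rw [this]
  exact (isOpen_lt continuous_const cont0).inter ((isOpen_lt continuous_const cont1).inter
    (isOpen_lt (cont0.add cont1) continuous_const))

lemma open_Ext : IsOpen ExtSet :=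
  ((isOpen_lt cont0 continuous_const).union (isOpen_lt cont1 continuous_const)).union
    (isOpen_lt continuous_const (cont0.add cont1))

lemma compl_sub : Panᶜ ⊆ Hole ∪ ExtSet := by
  intro p hp
  by_contra hc
  rw [mem_union, not_or] at hc
  obtain ⟨hH, hE⟩ := hc
  simp only [ExtSet, mem_union, mem_setOf_eq, not_or, not_lt] at hE
  obtain ⟨⟨e1, e2⟩, e3⟩ := hE
  simp only [Hole, mem_setOf_eq, not_and_or, not_lt] at hH
  rcases hH with h | h | h
  · exact hp (Q2_subP ⟨e1, h, e2, e3⟩)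
  · exact hp (Q1_subP ⟨e1, e2, h, e3⟩)
  · exact hp (Q3_subP ⟨e1, e2, h, e3⟩)

lemma disj_HE : Disjoint Hole ExtSet := by
  rw [Set.disjoint_left]
  rintro p ⟨h1, h2, h3⟩ ((h | h) | h) <;> simp only [mem_setOf_eq] at h <;> linarith

lemma hole_center_notP : pt (3/2) (3/2) ∉ Pan :=
  hole_not_mem (by norm_num) (by norm_num) (by norm_num)

lemma hole_bounded : Bornology.IsBounded (connectedComponentIn Panᶜ (pt (3/2) (3/2))) := by
  have hmem : pt (3/2) (3/2) ∈ Panᶜ := hole_center_notP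
  have hconn : IsPreconnected (connectedComponentIn Panᶜ (pt (3/2) (3/2))) :=
    (isPreconnected_connectedComponentIn)
  have hsub : connectedComponentIn Panᶜ (pt (3/2) (3/2)) ⊆ Hole ∪ ExtSet :=
    (connectedComponentIn_subset _ _).trans compl_sub
  have hin : (connectedComponentIn Panᶜ (pt (3/2) (3/2)) ∩ Hole).Nonempty :=
    ⟨pt (3/2) (3/2), mem_connectedComponentIn hmem, by norm_num [Hole]⟩
  have hH : connectedComponentIn Panᶜ (pt (3/2) (3/2)) ⊆ Hole :=
    hconn.subset_left_of_subset_union open_Hole open_Ext disj_HE hsub hin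
  refine (bounded_of_coords 4 (by norm_num) ?_).subset hH
  rintro p ⟨h1, h2, h3⟩
  constructor <;> rw [abs_le] <;> constructor <;> linarith

end FullCirculantAux

/-- The bound `k ≥ 4` in "a full circulant polygon `P_k^{k-1}` with
`k ≥ 4` has no holes" is tight: there exists a full circulant polygon `P_3^2`
(e.g. a triangle with a concentric triangular hole) whose complement has a bounded
connected component. -/
theorem fullCirculant_three_with_hole :
    ∃ (P : Set Pt) (g w : Fin 3 → Pt),
      IsFullCirculant P 3 g w ∧
      ∃ p : Pt, p ∉ P ∧ Bornology.IsBounded (connectedComponentIn Pᶜ p) := by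
  refine ⟨Pan, gpt, wpt, ⟨⟨compact_P, connected_P, closure_int_P, ⟨E12, frontier_P_sub⟩⟩,
    g_inj, w_inj, ?_, ?_, vis_eq, fun p hp => guard_count hp⟩,
    pt (3/2) (3/2), hole_center_notP, hole_bounded⟩
  · intro i
    fin_cases i
    exacts [Q1_subP A_mem1, Q1_subP B_mem1, Q2_subP C_mem2]
  · intro i
    fin_cases i
    exacts [Q3_subP w0_mem3, Q2_subP w1_mem2, Q1_subP w2_mem1]
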